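/- There exists a constant C₀ > 0 such that for every integer j ≥ 1, every real h ≥ 0 and every real z ≥ 1 the following holds. Define 𝓕(z) = e^{−jz²/2} ∫₀^∞ e^{−t² + 2t√j z} t^h dt, 𝓤(z) = e^{−jz²/2} ∫₀^∞ e^{−t² − 2t√j z} t^h dt, and the Wronskian W(z) = 𝓕′(z)𝓤(z) − 𝓕(z)𝓤′(z). With y = √j z, t_* = y/2 + √(h²/2 + y²/4), s_* = −y/2 + √(h²/2 + y²/4), F̂(z) = −jz²/2 − t_*² + 2t_* y + h·log t_*, and Û(z) = −jz²/2 − s_*² − 2s_* y + h·log s_* (with the convention h·log s_* = 0 when h = 0), one has W(z) > 0 and e^{F̂(z) + Û(z)} ≤ C₀ · W(z). -/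

import Mathlib

open MeasureTheory Real Set Metric

private lemma contOn_aux {h c : ℝ} :
    ContinuousOn (fun t : ℝ => Real.exp (-t ^ 2 + 2 * t * c) * t ^ h) (Set.Ioi 0) := by
  apply ContinuousOn.mul
  · exact (Real.continuous_exp.comp (by continuity)).continuousOn
  · intro t ht
    exact (Real.continuousAt_rpow_const t h (Or.inl (ne_of_gt ht))).continuousWithinAt

private lemma integ_aux {h : ℝ} (hh : 0 ≤ h) (c : ℝ) :
    IntegrableOn (fun t : ℝ => Real.exp (-t ^ 2 + 2 * t * c) * t ^ h) (Set.Ioi 0) := by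
  set a : ℝ := 2 * c + h with ha
  have hint : Integrable (fun t : ℝ =>
      Real.exp (a ^ 2 / 4) * Real.exp (-(t - a / 2) ^ 2)) := by
    have h1 : Integrable (fun t : ℝ => Real.exp (-(1:ℝ) * t ^ 2)) :=
      integrable_exp_neg_mul_sq one_pos
    have h2 : Integrable (fun t : ℝ => Real.exp (-(t - a / 2) ^ 2)) := by
      have := h1.comp_sub_right (a / 2)
      simpa using this
    exact h2.const_mul _
  refine Integrable.mono hint.integrableOn
    (contOn_aux.aestronglyMeasurable measurableSet_Ioi) ?_
  rw [ae_restrict_iff' measurableSet_Ioi]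
  filter_upwards with t ht
  have ht0 : (0:ℝ) < t := ht
  have h1 : t ^ h ≤ Real.exp (h * t) := by
    rw [Real.rpow_def_of_pos ht0]
    refine Real.exp_le_exp.2 ?_
    nlinarith [Real.log_le_sub_one_of_pos ht0]
  have h2 : (0:ℝ) ≤ t ^ h := Real.rpow_nonneg ht0.le h
  rw [Real.norm_eq_abs, abs_of_nonneg (mul_nonneg (Real.exp_pos _).le h2),
    Real.norm_eq_abs, abs_of_nonneg (mul_nonneg (Real.exp_pos _).le (Real.exp_pos _).le)]
  calc Real.exp (-t ^ 2 + 2 * t * c) * t ^ h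
      ≤ Real.exp (-t ^ 2 + 2 * t * c) * Real.exp (h * t) :=
        mul_le_mul_of_nonneg_left h1 (Real.exp_pos _).le
    _ = Real.exp (a ^ 2 / 4) * Real.exp (-(t - a / 2) ^ 2) := by
        rw [← Real.exp_add, ← Real.exp_add]; congr 1; rw [ha]; ring

private lemma integ_aux2 {h : ℝ} (hh : 0 ≤ h) (c : ℝ) :
    IntegrableOn (fun t : ℝ => 2 * t * (Real.exp (-t ^ 2 + 2 * t * c) * t ^ h))
      (Set.Ioi 0) := by
  have H := ((integ_aux (by linarith : (0:ℝ) ≤ h + 1) c).const_mul 2)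
  refine IntegrableOn.congr_fun H ?_ measurableSet_Ioi
  intro t ht
  have ht0 : (0:ℝ) < t := ht
  simp only []
  rw [Real.rpow_add_one (ne_of_gt ht0)]
  ring

private lemma cont_aux2 {h c : ℝ} :
    ContinuousOn (fun t : ℝ => 2 * t * (Real.exp (-t ^ 2 + 2 * t * c) * t ^ h))
      (Set.Ioi 0) :=
  (continuous_const.mul continuous_id).continuousOn.mul contOn_aux

private lemma hasDeriv_K {h : ℝ} (hh : 0 ≤ h) (c₀ : ℝ) :
    HasDerivAt (fun c : ℝ => ∫ t in Set.Ioi (0:ℝ), Real.exp (-t ^ 2 + 2 * t * c) * t ^ h)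
      (∫ t in Set.Ioi (0:ℝ), 2 * t * (Real.exp (-t ^ 2 + 2 * t * c₀) * t ^ h)) c₀ := by
  have key := hasDerivAt_integral_of_dominated_loc_of_deriv_le (μ := volume.restrict (Ioi 0))
    (F := fun c t => Real.exp (-t ^ 2 + 2 * t * c) * t ^ h)
    (F' := fun c t => 2 * t * (Real.exp (-t ^ 2 + 2 * t * c) * t ^ h))
    (x₀ := c₀) (s := Metric.ball c₀ 1)
    (bound := fun t => 2 * t * (Real.exp (-t ^ 2 + 2 * t * (c₀ + 1)) * t ^ h))
    (Metric.ball_mem_nhds c₀ one_pos)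
    (Filter.Eventually.of_forall fun c =>
      contOn_aux.aestronglyMeasurable measurableSet_Ioi)
    (integ_aux hh c₀)
    (cont_aux2.aestronglyMeasurable measurableSet_Ioi)
    ?_ (integ_aux2 hh (c₀ + 1)) ?_
  · exact key.2
  · rw [ae_restrict_iff' measurableSet_Ioi]
    filter_upwards with t ht
    intro c hc
    have ht0 : (0:ℝ) < t := ht
    have h2 : (0:ℝ) ≤ t ^ h := Real.rpow_nonneg ht0.le h
    have hcle : c ≤ c₀ + 1 := by
      have h3 := mem_ball_iff_norm.1 hc
      have h4 := abs_lt.1 (by simpa [Real.norm_eq_abs] using h3)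
      linarith [h4.2]
    rw [Real.norm_eq_abs, abs_of_nonneg (by positivity)]
    have h5 : Real.exp (-t ^ 2 + 2 * t * c) ≤ Real.exp (-t ^ 2 + 2 * t * (c₀ + 1)) := by
      apply Real.exp_le_exp.2; nlinarith
    have h3 : Real.exp (-t ^ 2 + 2 * t * c) * t ^ h
        ≤ Real.exp (-t ^ 2 + 2 * t * (c₀ + 1)) * t ^ h :=
      mul_le_mul_of_nonneg_right h5 h2
    nlinarith [h3]
  · filter_upwards with t
    intro c hc
    have hinner : HasDerivAt (fun c : ℝ => -t ^ 2 + 2 * t * c) (2 * t) c := by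
      simpa using ((hasDerivAt_id c).const_mul (2 * t)).const_add (-t ^ 2)
    have := (hinner.exp.mul_const (t ^ h))
    exact this.congr_deriv (by ring)

private lemma integral_lb {f : ℝ → ℝ} (hf : IntegrableOn f (Set.Ioi 0))
    (hpos : ∀ t ∈ Set.Ioi (0:ℝ), 0 ≤ f t) {a b m : ℝ} (ha : 0 ≤ a) (hab : a < b)
    (hm : ∀ t ∈ Set.Ioc a b, m ≤ f t) :
    m * (b - a) ≤ ∫ t in Set.Ioi (0:ℝ), f t := by
  have hsub : Set.Ioc a b ⊆ Set.Ioi 0 := fun t ht => lt_of_le_of_lt ha ht.1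
  have h1 : m * (volume (Set.Ioc a b)).toReal ≤ ∫ t in Set.Ioc a b, f t :=
    setIntegral_ge_of_const_le_real measurableSet_Ioc
      (by simp [Real.volume_Ioc]) hm (hf.mono_set hsub)
  have h2 : ∫ t in Set.Ioc a b, f t ≤ ∫ t in Set.Ioi 0, f t := by
    apply setIntegral_mono_set hf
    · rw [Filter.EventuallyLE, ae_restrict_iff' measurableSet_Ioi]
      filter_upwards with t ht using hpos t ht
    · exact HasSubset.Subset.eventuallyLE hsub
  have h3 : (volume (Set.Ioc a b)).toReal = b - a := by
    rw [Real.volume_Ioc, ENNReal.toReal_ofReal (by linarith)]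
  rw [h3] at h1
  linarith

private lemma B_point {h y tstar sstar : ℝ} (hh : 0 ≤ h) (hy1 : 1 ≤ y) (ht1 : 1 ≤ tstar)
    (ht0 : 0 < tstar) (hts : tstar = sstar + y) (hs0 : 0 ≤ sstar)
    (hprod : tstar * sstar = h ^ 2 / 2) {s : ℝ} (hs1 : sstar < s)
    (hs2 : s ≤ sstar + 1 / tstar) :
    Real.exp (-sstar ^ 2 - 2 * sstar * y + h * Real.log sstar - 3)
      ≤ Real.exp (-s ^ 2 + 2 * s * (-y)) * s ^ h := by
  have hspos : (0:ℝ) < s := lt_of_le_of_lt hs0 hs1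
  rw [Real.rpow_def_of_pos hspos, ← Real.exp_add]
  apply Real.exp_le_exp.2
  have hlog : h * Real.log sstar ≤ h * Real.log s := by
    rcases eq_or_lt_of_le hh with h0 | h0
    · rw [← h0]; simp
    · have hss : (0:ℝ) < sstar := by nlinarith
      exact mul_le_mul_of_nonneg_left (Real.log_le_log hss hs1.le) hh
  have hd0 : (0:ℝ) < 1 / tstar := by positivity
  have hd1 : 1 / tstar * tstar = 1 := by field_simp
  have hd2 : 1 / tstar ≤ 1 := by rw [div_le_one ht0]; exact ht1
  have hub : s + sstar + 2 * y ≤ 2 * tstar + 1 / tstar := by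
    rw [hts] at hs2 ⊢; linarith
  have hm : (s - sstar) * (s + sstar + 2 * y) ≤ 1 / tstar * (2 * tstar + 1 / tstar) :=
    mul_le_mul (by linarith) hub (by linarith) hd0.le
  nlinarith [hm, hd1, hd2, hd0, hlog]

private lemma A1_point_low {h y tstar sstar : ℝ} (hh : 0 ≤ h) (hy1 : 1 ≤ y) (ht1 : 1 ≤ tstar)
    (ht0 : 0 < tstar) (hts : tstar = sstar + y) (hs0 : 0 ≤ sstar) (hsst2 : sstar ≤ 2)
    {t : ℝ} (h1 : tstar < t) (h2 : t ≤ tstar + 1 / 5) :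
    2 * tstar * Real.exp (-tstar ^ 2 + 2 * tstar * y + h * Real.log tstar - 1)
      ≤ 2 * t * (Real.exp (-t ^ 2 + 2 * t * y) * t ^ h) := by
  have htpos : (0:ℝ) < t := lt_trans ht0 h1
  rw [Real.rpow_def_of_pos htpos, ← Real.exp_add, mul_comm (Real.log t) h]
  have hexp : -tstar ^ 2 + 2 * tstar * y + h * Real.log tstar - 1
      ≤ -t ^ 2 + 2 * t * y + h * Real.log t := by
    have hlog : h * Real.log tstar ≤ h * Real.log t :=
      mul_le_mul_of_nonneg_left (Real.log_le_log ht0 h1.le) hh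
    have hu : (t - tstar) * (t + tstar - 2 * y) ≤ 1 / 5 * (1 / 5 + 2 * 2) := by
      apply mul_le_mul (by linarith) _ _ (by norm_num)
      · rw [hts]; linarith
      · rw [hts]; linarith
    nlinarith [hu, hlog]
  calc 2 * tstar * Real.exp (-tstar ^ 2 + 2 * tstar * y + h * Real.log tstar - 1)
      ≤ 2 * t * Real.exp (-t ^ 2 + 2 * t * y + h * Real.log t) :=
        mul_le_mul (by linarith) (Real.exp_le_exp.2 hexp) (Real.exp_pos _).le (by linarith)
    _ = 2 * t * Real.exp (-t ^ 2 + 2 * t * y + h * Real.log t) := rfl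

private lemma A1_point_high {h y tstar sstar : ℝ} (hh : 0 ≤ h) (hc : 2 < h) (hy1 : 1 ≤ y)
    (ht1 : 1 ≤ tstar) (ht0 : 0 < tstar) (hts : tstar = sstar + y) (hss : 0 < sstar)
    (hprod : tstar * sstar = h ^ 2 / 2)
    {t : ℝ} (h1 : tstar - 1 / 2 < t) (h2 : t ≤ tstar) :
    tstar * Real.exp (-tstar ^ 2 + 2 * tstar * y + h * Real.log tstar - 1)
      ≤ 2 * t * (Real.exp (-t ^ 2 + 2 * t * y) * t ^ h) := by
  have htpos : (0:ℝ) < t := by linarith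
  rw [Real.rpow_def_of_pos htpos, ← Real.exp_add, mul_comm (Real.log t) h]
  have hexp : -tstar ^ 2 + 2 * tstar * y + h * Real.log tstar - 1
      ≤ -t ^ 2 + 2 * t * y + h * Real.log t := by
    have hu0 : 0 ≤ tstar - t := by linarith
    have hu2 : tstar - t ≤ 1 / 2 := by linarith
    have hlog : Real.log tstar - Real.log t ≤ (tstar - t) / t := by
      have h3 := Real.log_le_sub_one_of_pos (div_pos ht0 htpos)
      rw [Real.log_div (ne_of_gt ht0) (ne_of_gt htpos)] at h3
      have h4 : tstar / t - 1 = (tstar - t) / t := by field_simp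
      linarith [h4 ▸ h3]
    have hkey : h * (Real.log tstar - Real.log t) ≤ 2 * sstar * (tstar - t) := by
      have e0 : h * (Real.log tstar - Real.log t) ≤ h * ((tstar - t) / t) :=
        mul_le_mul_of_nonneg_left hlog hh
      have e1 : h * ((tstar - t) / t) ≤ 2 * sstar * (tstar - t) := by
        rw [show h * ((tstar - t) / t) = h * (tstar - t) / t from by ring,
          div_le_iff₀ htpos]
        have e3 : sstar * (tstar - t) * tstar = (tstar - t) * (h ^ 2 / 2) := by
          rw [show sstar * (tstar - t) * tstar = (tstar - t) * (tstar * sstar) from by ring,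
            hprod]
        have e4 : (tstar - t) * h ≤ (tstar - t) * (h ^ 2 / 2) := by
          nlinarith [mul_nonneg hu0 (by nlinarith : (0:ℝ) ≤ h ^ 2 / 2 - h)]
        have e5 : sstar * (tstar - t) * tstar ≤ 2 * sstar * (tstar - t) * t := by
          nlinarith [mul_nonneg (mul_nonneg hss.le hu0) (by linarith : (0:ℝ) ≤ 2 * t - tstar)]
        nlinarith [e3, e4, e5]
      linarith
    have husq : (tstar - t) * (tstar - t) ≤ 1 / 4 := by nlinarith [hu0, hu2]
    nlinarith [hkey, husq, hts]
  calc tstar * Real.exp (-tstar ^ 2 + 2 * tstar * y + h * Real.log tstar - 1)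
      ≤ 2 * t * Real.exp (-t ^ 2 + 2 * t * y + h * Real.log t) :=
        mul_le_mul (by linarith) (Real.exp_le_exp.2 hexp) (Real.exp_pos _).le (by linarith)
    _ = 2 * t * Real.exp (-t ^ 2 + 2 * t * y + h * Real.log t) := rfl

set_option maxHeartbeats 1000000 in
/-- Lemma B.2(2): a uniform two-sided control of the Wronskian
`W = 𝓕′𝓤 − 𝓕𝓤′` of the two fundamental solutions `𝓕, 𝓤` of the model ODE on the Calabi
model space: `W(z) > 0` and `e^{F̂(z)+Û(z)} ≤ C₀ · W(z)`, with `C₀` independent of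
`j ≥ 1`, `h ≥ 0` and `z ≥ 1`. -/
theorem wronskian_uniform_bound :
    ∃ C₀ : ℝ, 0 < C₀ ∧
      ∀ (j : ℕ), 1 ≤ j → ∀ (h : ℝ), 0 ≤ h →
      ∀ F U : ℝ → ℝ,
      (∀ z, F z = Real.exp (-(j : ℝ) * z ^ 2 / 2) *
          ∫ t in Set.Ioi (0 : ℝ),
            Real.exp (-t ^ 2 + 2 * t * (Real.sqrt (j : ℝ) * z)) * t ^ h) →
      (∀ z, U z = Real.exp (-(j : ℝ) * z ^ 2 / 2) *
          ∫ t in Set.Ioi (0 : ℝ),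
            Real.exp (-t ^ 2 - 2 * t * (Real.sqrt (j : ℝ) * z)) * t ^ h) →
      ∀ z : ℝ, 1 ≤ z →
      ∀ y tstar sstar : ℝ,
        y = Real.sqrt (j : ℝ) * z →
        tstar = y / 2 + Real.sqrt (h ^ 2 / 2 + y ^ 2 / 4) →
        sstar = -y / 2 + Real.sqrt (h ^ 2 / 2 + y ^ 2 / 4) →
        0 < deriv F z * U z - F z * deriv U z ∧
        Real.exp ((-(j : ℝ) * z ^ 2 / 2 - tstar ^ 2 + 2 * tstar * y + h * Real.log tstar) +
            (-(j : ℝ) * z ^ 2 / 2 - sstar ^ 2 - 2 * sstar * y + h * Real.log sstar))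
          ≤ C₀ * (deriv F z * U z - F z * deriv U z) := by
  refine ⟨3 * Real.exp 4, by positivity, ?_⟩
  intro j hj h hh F U hF hU z hz y tstar sstar hy htst hsst
  set sj : ℝ := Real.sqrt (j : ℝ) with hsj
  have hj1 : (1:ℝ) ≤ (j:ℝ) := by exact_mod_cast hj
  have hsj1 : 1 ≤ sj := by rw [hsj]; exact Real.one_le_sqrt.2 hj1
  have hyz : sj * z = y := hy.symm
  have hy1 : (1:ℝ) ≤ y := by rw [hy]; nlinarith
  have hy0 : (0:ℝ) < y := by linarith
  have hR2 : Real.sqrt (h ^ 2 / 2 + y ^ 2 / 4) ^ 2 = h ^ 2 / 2 + y ^ 2 / 4 :=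
    Real.sq_sqrt (by positivity)
  have hRy : y / 2 ≤ Real.sqrt (h ^ 2 / 2 + y ^ 2 / 4) := by
    rw [show y / 2 = Real.sqrt ((y / 2) ^ 2) from (Real.sqrt_sq (by linarith)).symm]
    exact Real.sqrt_le_sqrt (by nlinarith)
  have hts : tstar = sstar + y := by rw [htst, hsst]; ring
  have hty : y ≤ tstar := by rw [htst]; linarith
  have ht1 : (1:ℝ) ≤ tstar := le_trans hy1 hty
  have ht0 : (0:ℝ) < tstar := by linarith
  have hs0 : (0:ℝ) ≤ sstar := by rw [hsst]; linarith
  have hprod : tstar * sstar = h ^ 2 / 2 := by rw [htst, hsst]; nlinarith [hR2]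
  have hsh : sstar ≤ h := by
    have hRh : Real.sqrt (h ^ 2 / 2 + y ^ 2 / 4) ≤ h + y / 2 := by
      rw [show h + y / 2 = Real.sqrt ((h + y / 2) ^ 2) from
        (Real.sqrt_sq (by linarith)).symm]
      exact Real.sqrt_le_sqrt (by nlinarith)
    rw [hsst]; linarith
  have hKD := fun c₀ : ℝ => hasDeriv_K hh c₀
  -- function equalities
  have hFeq : F = fun w => Real.exp (-(j:ℝ) * w ^ 2 / 2) *
      ∫ t in Set.Ioi (0:ℝ), Real.exp (-t ^ 2 + 2 * t * (sj * w)) * t ^ h := by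
    funext w; exact hF w
  have hUeq : U = fun w => Real.exp (-(j:ℝ) * w ^ 2 / 2) *
      ∫ t in Set.Ioi (0:ℝ), Real.exp (-t ^ 2 + 2 * t * (-(sj * w))) * t ^ h := by
    funext w; rw [hU w]
    congr 1
    have hfun : (fun t : ℝ => Real.exp (-t ^ 2 - 2 * t * (sj * w)) * t ^ h)
        = fun t : ℝ => Real.exp (-t ^ 2 + 2 * t * (-(sj * w))) * t ^ h := by
      funext t
      rw [show -t ^ 2 - 2 * t * (sj * w) = -t ^ 2 + 2 * t * (-(sj * w)) from by ring]
    rw [hfun]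
  -- derivatives
  have hE : HasDerivAt (fun w : ℝ => Real.exp (-(j:ℝ) * w ^ 2 / 2))
      (Real.exp (-(j:ℝ) * z ^ 2 / 2) * (-(j:ℝ) * z)) z := by
    have h1 : HasDerivAt (fun w : ℝ => -(j:ℝ) * w ^ 2 / 2) (-(j:ℝ) * z) z := by
      have := ((hasDerivAt_pow 2 z).const_mul (-(j:ℝ))).div_const 2
      exact this.congr_deriv (by push_cast; ring)
    exact h1.exp
  have hin : HasDerivAt (fun w : ℝ => sj * w) sj z := by
    simpa using (hasDerivAt_id z).const_mul sj
  have hinU : HasDerivAt (fun w : ℝ => -(sj * w)) (-sj) z := hin.neg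
  have hdF : HasDerivAt F
      (Real.exp (-(j:ℝ) * z ^ 2 / 2) * (-(j:ℝ) * z) *
        (∫ t in Set.Ioi (0:ℝ), Real.exp (-t ^ 2 + 2 * t * y) * t ^ h) +
       Real.exp (-(j:ℝ) * z ^ 2 / 2) *
        ((∫ t in Set.Ioi (0:ℝ), 2 * t * (Real.exp (-t ^ 2 + 2 * t * y) * t ^ h)) * sj)) z := by
    rw [hFeq, ← hyz]
    exact hE.mul ((hKD (sj * z)).comp z hin)
  have hdU : HasDerivAt U
      (Real.exp (-(j:ℝ) * z ^ 2 / 2) * (-(j:ℝ) * z) *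
        (∫ t in Set.Ioi (0:ℝ), Real.exp (-t ^ 2 + 2 * t * (-y)) * t ^ h) +
       Real.exp (-(j:ℝ) * z ^ 2 / 2) *
        ((∫ t in Set.Ioi (0:ℝ), 2 * t * (Real.exp (-t ^ 2 + 2 * t * (-y)) * t ^ h)) * (-sj))) z := by
    rw [hUeq, ← hyz]
    exact hE.mul (HasDerivAt.comp (h₂ := fun c : ℝ => ∫ t in Set.Ioi (0:ℝ), Real.exp (-t ^ 2 + 2 * t * c) * t ^ h) z (hKD (-(sj * z))) hinU)
  have hFz : F z = Real.exp (-(j:ℝ) * z ^ 2 / 2) *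
      ∫ t in Set.Ioi (0:ℝ), Real.exp (-t ^ 2 + 2 * t * y) * t ^ h := by
    rw [hFeq, ← hyz]
  have hUz : U z = Real.exp (-(j:ℝ) * z ^ 2 / 2) *
      ∫ t in Set.Ioi (0:ℝ), Real.exp (-t ^ 2 + 2 * t * (-y)) * t ^ h := by
    rw [hUeq, ← hyz]
  set A : ℝ := ∫ t in Set.Ioi (0:ℝ), Real.exp (-t ^ 2 + 2 * t * y) * t ^ h with hAdef
  set B : ℝ := ∫ t in Set.Ioi (0:ℝ), Real.exp (-t ^ 2 + 2 * t * (-y)) * t ^ h with hBdef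
  set A₁ : ℝ := ∫ t in Set.Ioi (0:ℝ), 2 * t * (Real.exp (-t ^ 2 + 2 * t * y) * t ^ h) with hA1def
  set B₁ : ℝ := ∫ t in Set.Ioi (0:ℝ), 2 * t * (Real.exp (-t ^ 2 + 2 * t * (-y)) * t ^ h) with hB1def
  have hWeq : deriv F z * U z - F z * deriv U z
      = sj * Real.exp (-(j:ℝ) * z ^ 2 / 2) ^ 2 * (A₁ * B + A * B₁) := by
    rw [hdF.deriv, hdU.deriv, hFz, hUz]; ring
  -- nonnegativity
  have hA0 : 0 ≤ A := setIntegral_nonneg measurableSet_Ioi fun t ht =>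
    mul_nonneg (Real.exp_pos _).le (Real.rpow_nonneg (le_of_lt ht) h)
  have hB10 : 0 ≤ B₁ := setIntegral_nonneg measurableSet_Ioi fun t ht => by
    have ht' : (0:ℝ) < t := ht
    exact mul_nonneg (by linarith) (mul_nonneg (Real.exp_pos _).le
      (Real.rpow_nonneg ht'.le h))
  -- lower bound for B
  have hBlb : 1 / tstar * Real.exp (-sstar ^ 2 - 2 * sstar * y + h * Real.log sstar - 3)
      ≤ B := by
    have key := integral_lb (integ_aux hh (-y))
      (fun t ht => mul_nonneg (Real.exp_pos _).le (Real.rpow_nonneg (le_of_lt ht) h))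
      (a := sstar) (b := sstar + 1 / tstar)
      (m := Real.exp (-sstar ^ 2 - 2 * sstar * y + h * Real.log sstar - 3)) hs0
      (by have h9 : 0 < 1 / tstar := by positivity
          linarith)
      (fun s hs => B_point hh hy1 ht1 ht0 hts hs0 hprod hs.1 hs.2)
    rw [hBdef]
    linarith only [key]
  -- lower bound for A₁
  have hA1lb : 2 / 5 * tstar *
      Real.exp (-tstar ^ 2 + 2 * tstar * y + h * Real.log tstar - 1) ≤ A₁ := by
    rcases le_or_gt h 2 with hc | hc
    · have hsst2 : sstar ≤ 2 := le_trans hsh hc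
      have key := integral_lb (integ_aux2 hh y)
        (fun t ht => by
          have ht' : (0:ℝ) < t := ht
          exact mul_nonneg (by linarith) (mul_nonneg (Real.exp_pos _).le
            (Real.rpow_nonneg ht'.le h)))
        (a := tstar) (b := tstar + 1 / 5)
        (m := 2 * tstar * Real.exp (-tstar ^ 2 + 2 * tstar * y + h * Real.log tstar - 1))
        ht0.le (by linarith)
        (fun t htt => A1_point_low hh hy1 ht1 ht0 hts hs0 hsst2 htt.1 htt.2)
      rw [hA1def]
      linarith only [key]
    · have hss : (0:ℝ) < sstar := by nlinarith only [hprod, hc, ht0, hs0]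
      have key := integral_lb (integ_aux2 hh y)
        (fun t ht => by
          have ht' : (0:ℝ) < t := ht
          exact mul_nonneg (by linarith) (mul_nonneg (Real.exp_pos _).le
            (Real.rpow_nonneg ht'.le h)))
        (a := tstar - 1 / 2) (b := tstar)
        (m := tstar * Real.exp (-tstar ^ 2 + 2 * tstar * y + h * Real.log tstar - 1))
        (by linarith) (by linarith)
        (fun t htt => A1_point_high hh hc hy1 ht1 ht0 hts hss hprod htt.1 htt.2)
      have hxnn : 0 ≤ tstar * Real.exp (-tstar ^ 2 + 2 * tstar * y + h * Real.log tstar - 1) :=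
        mul_nonneg ht0.le (Real.exp_pos _).le
      rw [hA1def]
      linarith only [key, hxnn]
  -- combining
  have hExp2 : (0:ℝ) < Real.exp (-(j:ℝ) * z ^ 2 / 2) ^ 2 :=
    pow_pos (Real.exp_pos _) 2
  have hA1pos : 0 < 2 / 5 * tstar *
      Real.exp (-tstar ^ 2 + 2 * tstar * y + h * Real.log tstar - 1) :=
    mul_pos (mul_pos (by norm_num) ht0) (Real.exp_pos _)
  have hBpos : 0 < 1 / tstar *
      Real.exp (-sstar ^ 2 - 2 * sstar * y + h * Real.log sstar - 3) :=
    mul_pos (one_div_pos.2 ht0) (Real.exp_pos _)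
  have hA1nn : 0 ≤ A₁ := le_trans hA1pos.le hA1lb
  have hBnn : 0 ≤ B := le_trans hBpos.le hBlb
  have hABlb : 2 / 5 * Real.exp (-tstar ^ 2 + 2 * tstar * y + h * Real.log tstar - 1) *
      Real.exp (-sstar ^ 2 - 2 * sstar * y + h * Real.log sstar - 3) ≤ A₁ * B := by
    have h1 := mul_le_mul hA1lb hBlb hBpos.le hA1nn
    have h2 : (2 / 5 * tstar * Real.exp (-tstar ^ 2 + 2 * tstar * y + h * Real.log tstar - 1))
        * (1 / tstar * Real.exp (-sstar ^ 2 - 2 * sstar * y + h * Real.log sstar - 3))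
        = 2 / 5 * Real.exp (-tstar ^ 2 + 2 * tstar * y + h * Real.log tstar - 1) *
          Real.exp (-sstar ^ 2 - 2 * sstar * y + h * Real.log sstar - 3) := by
      field_simp
    rw [h2] at h1
    exact h1
  have key : Real.exp (-(j:ℝ) * z ^ 2 / 2) ^ 2 *
      (2 / 5 * Real.exp (-tstar ^ 2 + 2 * tstar * y + h * Real.log tstar - 1) *
        Real.exp (-sstar ^ 2 - 2 * sstar * y + h * Real.log sstar - 3))
      ≤ deriv F z * U z - F z * deriv U z := by
    rw [hWeq]
    have h3 := mul_le_mul_of_nonneg_left hABlb hExp2.le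
    have h4 : 0 ≤ Real.exp (-(j:ℝ) * z ^ 2 / 2) ^ 2 * (A₁ * B) :=
      mul_nonneg hExp2.le (mul_nonneg hA1nn hBnn)
    have h5 : 0 ≤ sj * Real.exp (-(j:ℝ) * z ^ 2 / 2) ^ 2 * (A * B₁) :=
      mul_nonneg (mul_nonneg (by linarith) hExp2.le) (mul_nonneg hA0 hB10)
    nlinarith only [h3, h4, h5, hsj1]
  constructor
  · calc (0:ℝ) < Real.exp (-(j:ℝ) * z ^ 2 / 2) ^ 2 *
        (2 / 5 * Real.exp (-tstar ^ 2 + 2 * tstar * y + h * Real.log tstar - 1) *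
          Real.exp (-sstar ^ 2 - 2 * sstar * y + h * Real.log sstar - 3)) :=
        mul_pos hExp2 (mul_pos (mul_pos (by norm_num) (Real.exp_pos _)) (Real.exp_pos _))
      _ ≤ _ := key
  · have hexpS : Real.exp ((-(j:ℝ) * z ^ 2 / 2 - tstar ^ 2 + 2 * tstar * y
        + h * Real.log tstar) +
        (-(j:ℝ) * z ^ 2 / 2 - sstar ^ 2 - 2 * sstar * y + h * Real.log sstar))
        = Real.exp 4 * (Real.exp (-(j:ℝ) * z ^ 2 / 2) ^ 2 *
          (Real.exp (-tstar ^ 2 + 2 * tstar * y + h * Real.log tstar - 1) *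
            Real.exp (-sstar ^ 2 - 2 * sstar * y + h * Real.log sstar - 3))) := by
      rw [pow_two (Real.exp (-(j:ℝ) * z ^ 2 / 2))]
      simp only [← Real.exp_add]
      congr 1; ring
    rw [hexpS]
    have hP : 0 ≤ Real.exp 4 * (Real.exp (-(j:ℝ) * z ^ 2 / 2) ^ 2 *
        (Real.exp (-tstar ^ 2 + 2 * tstar * y + h * Real.log tstar - 1) *
          Real.exp (-sstar ^ 2 - 2 * sstar * y + h * Real.log sstar - 3))) :=
      mul_nonneg (Real.exp_pos _).le (mul_nonneg hExp2.le
        (mul_nonneg (Real.exp_pos _).le (Real.exp_pos _).le))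
    have hstep := mul_le_mul_of_nonneg_left key
      (by positivity : (0:ℝ) ≤ 3 * Real.exp 4)
    nlinarith only [hstep, hP]
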